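/- Let g ≥ 0, r ≥ 1, and let F(x,y,u,t) be the rational power series (1/(1+xyut)^{r-1}) · Φ_g{(1-xyz^2)(1-xz)^g(1-yz)^g} / ((1-t)(1-x^2yu^2t^2)^g(1-xy^2u^2t^2)^g) with Φ_g as above. Then the diagonal generating function Σ_i ([u^i t^i] F) z^i equals T_{≤g}{(1-xyz^2)(1-xz)^g(1-yz)^g} / ((1+xyz)^{r-1}(1-x^2yz^2)^g(1-xy^2z^2)^g), where T_{≤g} keeps only terms of z-degree at most g, and [u^i t^i] denotes the coefficient of u^i t^i (an element of ℚ[x,y]). -/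

import Mathlib

open MvPolynomial

noncomputable section

/-- The coefficient ring `ℚ[x,y]`, with `x = X 0`, `y = X 1`. -/
abbrev Rxy := MvPolynomial (Fin 2) ℚ

/-- Formal power series in `u, t` (`u` is variable `0`, `t` is variable `1`) over `ℚ[x,y]`. -/
abbrev Sut := MvPowerSeries (Fin 2) Rxy

/-- Inclusion of constants `ℚ[x,y] → ℚ[x,y][[u,t]]`. -/
def Cc : Rxy →+* Sut := MvPowerSeries.C

/-- `(1 - xyz²)(1 - xz)^g (1 - yz)^g` as a polynomial in `z` over `ℚ[x,y]`. -/
def Wpoly (g : ℕ) : Polynomial Rxy :=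
  (1 - Polynomial.C (X 0 * X 1) * Polynomial.X ^ 2) *
    (1 - Polynomial.C (X 0) * Polynomial.X) ^ g *
    (1 - Polynomial.C (X 1) * Polynomial.X) ^ g

/-- The numerator `N = Φ_g{(1-xyz²)(1-xz)^g(1-yz)^g}`, where `Φ_g(z^j) = u^j t^j` for
`0 ≤ j ≤ g`, `Φ_g(z^{g+1}) = 0` and `Φ_g(z^j) = u^{j-1} t^j` for `g+2 ≤ j ≤ 2g+2`. -/
def NumS (g : ℕ) : Sut :=
  ∑ j ∈ Finset.range (2 * g + 3),
    (if j ≤ g then MvPowerSeries.X 0 ^ j * MvPowerSeries.X 1 ^ j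
     else if j = g + 1 then 0
     else MvPowerSeries.X 0 ^ (j - 1) * MvPowerSeries.X 1 ^ j) * Cc ((Wpoly g).coeff j)

/-- The denominator `(1+xyut)^{r-1} (1-t) (1-x²yu²t²)^g (1-xy²u²t²)^g`. -/
def DenS (g r : ℕ) : Sut :=
  (1 + Cc (X 0 * X 1) * MvPowerSeries.X 0 * MvPowerSeries.X 1) ^ (r - 1) *
    (1 - MvPowerSeries.X 1) *
    (1 - Cc (X 0 ^ 2 * X 1) * MvPowerSeries.X 0 ^ 2 * MvPowerSeries.X 1 ^ 2) ^ g *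
    (1 - Cc (X 0 * X 1 ^ 2) * MvPowerSeries.X 0 ^ 2 * MvPowerSeries.X 1 ^ 2) ^ g

/-- The coefficient `c_{i,n} ∈ ℚ[x,y]` of `u^i t^n` in a power series. -/
def coeffUT (F : Sut) (i n : ℕ) : Rxy :=
  MvPowerSeries.coeff (Finsupp.single 0 i + Finsupp.single 1 n) F

namespace Stmt15Aux

open Finsupp MvPowerSeries

lemma fin2_eq (s : Fin 2 →₀ ℕ) : s = single 0 (s 0) + single 1 (s 1) := by
  ext i
  fin_cases i <;> simp [Finsupp.single_apply]

lemma pair_apply0 (a b : ℕ) : ((single 0 a + single 1 b : Fin 2 →₀ ℕ)) 0 = a := by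
  simp [Finsupp.single_apply]

lemma pair_apply1 (a b : ℕ) : ((single 0 a + single 1 b : Fin 2 →₀ ℕ)) 1 = b := by
  simp [Finsupp.single_apply]

lemma pair_eq_iff {a b c d : ℕ} :
    (single 0 a + single 1 b : Fin 2 →₀ ℕ) = single 0 c + single 1 d ↔ a = c ∧ b = d := by
  constructor
  · intro h
    refine ⟨?_, ?_⟩
    · have := DFunLike.congr_fun h 0
      rwa [pair_apply0, pair_apply0] at this
    · have := DFunLike.congr_fun h 1
      rwa [pair_apply1, pair_apply1] at this
  · rintro ⟨rfl, rfl⟩; rfl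

lemma antidiag_prod {M : Type*} [AddCommMonoid M] (s : Fin 2 →₀ ℕ)
    (h : ((Fin 2 →₀ ℕ) × (Fin 2 →₀ ℕ)) → M) :
    ∑ p ∈ Finset.HasAntidiagonal.antidiagonal s, h p =
    ∑ q ∈ Finset.HasAntidiagonal.antidiagonal (s 0) ×ˢ Finset.HasAntidiagonal.antidiagonal (s 1),
      h (single 0 q.1.1 + single 1 q.2.1, single 0 q.1.2 + single 1 q.2.2) := by
  refine Finset.sum_nbij' (i := fun p => ((p.1 0, p.2 0), (p.1 1, p.2 1)))
    (j := fun q => (single 0 q.1.1 + single 1 q.2.1, single 0 q.1.2 + single 1 q.2.2))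
    ?_ ?_ ?_ ?_ ?_
  · intro p hp
    rw [Finset.HasAntidiagonal.mem_antidiagonal] at hp
    simp only [Finset.mem_product, Finset.HasAntidiagonal.mem_antidiagonal]
    constructor
    · have := DFunLike.congr_fun hp 0; simpa using this
    · have := DFunLike.congr_fun hp 1; simpa using this
  · intro q hq
    simp only [Finset.mem_product, Finset.HasAntidiagonal.mem_antidiagonal] at hq
    rw [Finset.HasAntidiagonal.mem_antidiagonal]
    have h1 : ((single 0 q.1.1 + single 1 q.2.1) + (single 0 q.1.2 + single 1 q.2.2) : Fin 2 →₀ ℕ)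
        = single 0 (q.1.1 + q.1.2) + single 1 (q.2.1 + q.2.2) := by
      simp [Finsupp.single_add]; abel
    rw [h1, hq.1, hq.2, ← fin2_eq]
  · intro p _
    simp only [← fin2_eq]
  · intro q hq
    simp [pair_apply0, pair_apply1]
  · intro p _
    rw [← fin2_eq p.1, ← fin2_eq p.2]

def Efun (f : PowerSeries Rxy) : Sut :=
  fun s => if s 0 = s 1 then PowerSeries.coeff (s 0) f else 0

lemma coeff_Efun (f : PowerSeries Rxy) (s : Fin 2 →₀ ℕ) :
    MvPowerSeries.coeff s (Efun f) =
      if s 0 = s 1 then PowerSeries.coeff (s 0) f else 0 := by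
  rw [MvPowerSeries.coeff_apply]; rfl

lemma Efun_one : Efun 1 = 1 := by
  refine MvPowerSeries.ext fun s => ?_
  rw [MvPowerSeries.coeff_one, coeff_Efun, PowerSeries.coeff_one]
  by_cases h : s 0 = s 1
  · by_cases h0 : s 0 = 0
    · have hs : s = 0 := by
        rw [fin2_eq s, h0, ← h, h0]; simp
      rw [if_pos h, if_pos h0, if_pos hs]
    · have hs : s ≠ 0 := fun hs => h0 (by rw [hs]; rfl)
      rw [if_pos h, if_neg h0, if_neg hs]
  · have hs : s ≠ 0 := fun hs => h (by rw [hs]; rfl)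
    rw [if_neg h, if_neg hs]

lemma Efun_add (f g : PowerSeries Rxy) : Efun (f + g) = Efun f + Efun g := by
  refine MvPowerSeries.ext fun s => ?_
  rw [map_add, coeff_Efun, coeff_Efun, coeff_Efun, map_add]
  split_ifs <;> simp

lemma Efun_mul (f g : PowerSeries Rxy) : Efun (f * g) = Efun f * Efun g := by
  refine MvPowerSeries.ext fun s => ?_
  rw [MvPowerSeries.coeff_mul, antidiag_prod, coeff_Efun]
  have hterm : ∀ q ∈ Finset.HasAntidiagonal.antidiagonal (s 0) ×ˢ Finset.HasAntidiagonal.antidiagonal (s 1),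
      MvPowerSeries.coeff (single 0 q.1.1 + single 1 q.2.1) (Efun f) *
        MvPowerSeries.coeff (single 0 q.1.2 + single 1 q.2.2) (Efun g) =
      (if q.1.1 = q.2.1 then PowerSeries.coeff q.1.1 f else 0) *
        (if q.1.2 = q.2.2 then PowerSeries.coeff q.1.2 g else 0) := by
    intro q _
    rw [coeff_Efun, coeff_Efun, pair_apply0, pair_apply0, pair_apply1, pair_apply1]
  rw [Finset.sum_congr rfl hterm]
  by_cases h : s 0 = s 1
  · rw [if_pos h, PowerSeries.coeff_mul, ← h, Finset.sum_product]
    refine Finset.sum_congr rfl fun a ha => ?_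
    rw [Finset.HasAntidiagonal.mem_antidiagonal] at ha
    symm
    rw [Finset.sum_eq_single_of_mem a (Finset.HasAntidiagonal.mem_antidiagonal.2 ha)]
    · simp
    · intro b hb hba
      rw [Finset.HasAntidiagonal.mem_antidiagonal] at hb
      split_ifs with h1 h2
      · exact absurd (Prod.ext h1.symm (h2.symm)) hba
      all_goals ring
  · rw [if_neg h]
    symm
    apply Finset.sum_eq_zero
    intro q hq
    simp only [Finset.mem_product, Finset.HasAntidiagonal.mem_antidiagonal] at hq
    split_ifs with h1 h2
    · exact absurd (by rw [← hq.1, ← hq.2, h1, h2]) h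
    all_goals ring

def E : PowerSeries Rxy →+* Sut where
  toFun := Efun
  map_one' := Efun_one
  map_mul' := Efun_mul
  map_zero' := by
    refine MvPowerSeries.ext fun s => ?_
    rw [coeff_Efun]
    simp
  map_add' := Efun_add

lemma coeff_E (f : PowerSeries Rxy) (s : Fin 2 →₀ ℕ) :
    MvPowerSeries.coeff s (E f) =
      if s 0 = s 1 then PowerSeries.coeff (s 0) f else 0 :=
  coeff_Efun f s

lemma E_monomial (k : ℕ) (c : Rxy) :
    E (PowerSeries.monomial k c) =
      MvPowerSeries.monomial (single 0 k + single 1 k) c := by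
  refine MvPowerSeries.ext fun s => ?_
  rw [coeff_E, MvPowerSeries.coeff_monomial, PowerSeries.coeff_monomial]
  by_cases h : s 0 = s 1
  · by_cases hk : s 0 = k
    · have hs : s = single 0 k + single 1 k := by
        rw [fin2_eq s, hk, ← h, hk]
      rw [if_pos h, if_pos hk, if_pos hs]
    · have hs : s ≠ single 0 k + single 1 k := by
        intro hs; exact hk (by rw [hs, pair_apply0])
      rw [if_pos h, if_neg hk, if_neg hs]
  · have hs : s ≠ single 0 k + single 1 k := by
      intro hs; exact h (by rw [hs, pair_apply0, pair_apply1])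
    rw [if_neg h, if_neg hs]

lemma E_C (c : Rxy) : E (PowerSeries.C c) = Cc c := by
  have h0 : ((single 0 0 + single 1 0 : Fin 2 →₀ ℕ)) = 0 := by simp
  rw [← PowerSeries.monomial_zero_eq_C_apply, E_monomial, h0]
  rfl

lemma E_X : E PowerSeries.X = MvPowerSeries.X 0 * MvPowerSeries.X 1 := by
  rw [PowerSeries.X_eq, E_monomial,
    show (MvPowerSeries.X 0 : Sut) = MvPowerSeries.monomial (single 0 1) 1 from rfl,
    show (MvPowerSeries.X 1 : Sut) = MvPowerSeries.monomial (single 1 1) 1 from rfl,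
    MvPowerSeries.monomial_mul_monomial, one_mul]

/-- The diagonal product lemma. -/
lemma coeff_E_mul (f : PowerSeries Rxy) (B : Sut) (n : ℕ) :
    coeffUT (E f * B) n n =
      PowerSeries.coeff n (f * PowerSeries.mk (fun i => coeffUT B i i)) := by
  unfold coeffUT
  rw [MvPowerSeries.coeff_mul, antidiag_prod]
  simp only [pair_apply0, pair_apply1]
  have hterm : ∀ q ∈ Finset.HasAntidiagonal.antidiagonal n ×ˢ Finset.HasAntidiagonal.antidiagonal n,
      MvPowerSeries.coeff (single 0 q.1.1 + single 1 q.2.1) (E f) *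
        MvPowerSeries.coeff (single 0 q.1.2 + single 1 q.2.2) B =
      (if q.1.1 = q.2.1 then PowerSeries.coeff q.1.1 f else 0) *
        MvPowerSeries.coeff (single 0 q.1.2 + single 1 q.2.2) B := by
    intro q _
    rw [coeff_E, pair_apply0, pair_apply1]
  rw [Finset.sum_congr rfl hterm, PowerSeries.coeff_mul, Finset.sum_product]
  refine Finset.sum_congr rfl fun a ha => ?_
  rw [Finset.HasAntidiagonal.mem_antidiagonal] at ha
  rw [Finset.sum_eq_single_of_mem a (Finset.HasAntidiagonal.mem_antidiagonal.2 ha)]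
  · rw [if_pos rfl, PowerSeries.coeff_mk]
  · intro b hb hba
    rw [Finset.HasAntidiagonal.mem_antidiagonal] at hb
    by_cases h1 : a.1 = b.1
    · exact absurd (Prod.ext h1.symm (show b.2 = a.2 by omega)) hba
    · rw [if_neg h1, zero_mul]

lemma coeff_NumS (g n m : ℕ) (hmn : m ≤ n) :
    coeffUT (NumS g) n m = if n = m ∧ n ≤ g then (Wpoly g).coeff n else 0 := by
  unfold coeffUT NumS
  rw [map_sum]
  have hterm : ∀ j ∈ Finset.range (2 * g + 3),
      MvPowerSeries.coeff (single 0 n + single 1 m)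
        ((if j ≤ g then MvPowerSeries.X 0 ^ j * MvPowerSeries.X 1 ^ j
          else if j = g + 1 then 0
          else MvPowerSeries.X 0 ^ (j - 1) * MvPowerSeries.X 1 ^ j) * Cc ((Wpoly g).coeff j)) =
      if j = n ∧ n = m ∧ n ≤ g then (Wpoly g).coeff n else 0 := by
    intro j _
    by_cases h1 : j ≤ g
    · rw [if_pos h1, X_pow_eq, X_pow_eq,
        show Cc ((Wpoly g).coeff j) = MvPowerSeries.monomial 0 ((Wpoly g).coeff j) from rfl,
        MvPowerSeries.monomial_mul_monomial, MvPowerSeries.monomial_mul_monomial,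
        one_mul, one_mul, add_zero, MvPowerSeries.coeff_monomial]
      by_cases hc : j = n ∧ n = m ∧ n ≤ g
      · obtain ⟨h2, h3, _⟩ := hc
        rw [if_pos (pair_eq_iff.2 ⟨h2.symm, by omega⟩), if_pos ⟨h2, h3, by omega⟩, h2]
      · rw [if_neg hc, if_neg]
        intro heq
        obtain ⟨h2, h3⟩ := pair_eq_iff.1 heq
        exact hc ⟨h2.symm, by omega, by omega⟩
    · by_cases h2 : j = g + 1
      · rw [if_neg h1, if_pos h2, zero_mul, map_zero, if_neg]
        rintro ⟨rfl, -, h4⟩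
        omega
      · rw [if_neg h1, if_neg h2, X_pow_eq, X_pow_eq,
          show Cc ((Wpoly g).coeff j) = MvPowerSeries.monomial 0 ((Wpoly g).coeff j) from rfl,
          MvPowerSeries.monomial_mul_monomial, MvPowerSeries.monomial_mul_monomial,
          one_mul, one_mul, add_zero, MvPowerSeries.coeff_monomial, if_neg, if_neg]
        · rintro ⟨rfl, -, h4⟩
          omega
        · intro heq
          obtain ⟨h3, h4⟩ := pair_eq_iff.1 heq
          omega
  rw [Finset.sum_congr rfl hterm]
  by_cases hC : n = m ∧ n ≤ g
  · rw [if_pos hC]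
    rw [Finset.sum_eq_single_of_mem n (Finset.mem_range.2 (by omega))]
    · rw [if_pos ⟨rfl, hC⟩]
    · intro j _ hjn
      rw [if_neg (fun hc => hjn hc.1)]
  · rw [if_neg hC]
    apply Finset.sum_eq_zero
    intro j _
    rw [if_neg (fun hc => hC hc.2)]

lemma coeff_X1_mul (Gs : Sut) (n m : ℕ) :
    coeffUT (MvPowerSeries.X 1 * Gs) n m =
      if 1 ≤ m then coeffUT Gs n (m - 1) else 0 := by
  unfold coeffUT
  rw [show (MvPowerSeries.X 1 : Sut) = MvPowerSeries.monomial (single 1 1) 1 from rfl,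
    MvPowerSeries.coeff_monomial_mul]
  have hle : (single 1 1 : Fin 2 →₀ ℕ) ≤ single 0 n + single 1 m ↔ 1 ≤ m := by
    rw [Finsupp.single_le_iff, pair_apply1]
  have hsub : ((single 0 n + single 1 m : Fin 2 →₀ ℕ)) - single 1 1
      = single 0 n + single 1 (m - 1) := by
    ext i
    rw [Finsupp.tsub_apply]
    fin_cases i <;> simp [Finsupp.single_apply]
  by_cases hm : 1 ≤ m
  · rw [if_pos hm, if_pos (hle.2 hm), one_mul, hsub]
  · rw [if_neg hm, if_neg (fun h => hm (hle.1 h))]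

lemma coeff_telescope (g n : ℕ) (Gs : Sut)
    (hG : (1 - MvPowerSeries.X 1) * Gs = NumS g) (m : ℕ) :
    coeffUT Gs n m = ∑ k ∈ Finset.range (m + 1), coeffUT (NumS g) n k := by
  have hstep : ∀ m' : ℕ, coeffUT (NumS g) n m' =
      coeffUT Gs n m' - (if 1 ≤ m' then coeffUT Gs n (m' - 1) else 0) := by
    intro m'
    rw [← hG, sub_mul, one_mul]
    unfold coeffUT
    rw [map_sub]
    rw [show MvPowerSeries.coeff (single 0 n + single 1 m') (MvPowerSeries.X 1 * Gs)
      = coeffUT (MvPowerSeries.X 1 * Gs) n m' from rfl, coeff_X1_mul]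
    rfl
  induction m with
  | zero =>
    rw [Finset.sum_range_one]
    have := hstep 0
    simp only [Nat.not_succ_le_zero, if_neg, Nat.le_zero] at this
    simpa using this.symm
  | succ m ih =>
    rw [Finset.sum_range_succ, ← ih]
    have := hstep (m + 1)
    rw [if_pos (by omega : 1 ≤ m + 1), Nat.add_sub_cancel] at this
    rw [this]
    ring

end Stmt15Aux

theorem stmt15 (g r : ℕ) (hr : 1 ≤ r) (F : Sut) (hF : DenS g r * F = NumS g) :
    ((1 + PowerSeries.C (X 0 * X 1) * PowerSeries.X) ^ (r - 1) *
        (1 - PowerSeries.C (X 0 ^ 2 * X 1) * PowerSeries.X ^ 2) ^ g *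
        (1 - PowerSeries.C (X 0 * X 1 ^ 2) * PowerSeries.X ^ 2) ^ g) *
      PowerSeries.mk (fun i => coeffUT F i i) =
    ∑ j ∈ Finset.range (g + 1),
      PowerSeries.C ((Wpoly g).coeff j) * PowerSeries.X ^ j := by
  classical
  set P : PowerSeries Rxy :=
    (1 + PowerSeries.C (X 0 * X 1) * PowerSeries.X) ^ (r - 1) *
      (1 - PowerSeries.C (X 0 ^ 2 * X 1) * PowerSeries.X ^ 2) ^ g *
      (1 - PowerSeries.C (X 0 * X 1 ^ 2) * PowerSeries.X ^ 2) ^ g with hP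
  have hEP : Stmt15Aux.E P =
      (1 + Cc (X 0 * X 1) * MvPowerSeries.X 0 * MvPowerSeries.X 1) ^ (r - 1) *
        (1 - Cc (X 0 ^ 2 * X 1) * MvPowerSeries.X 0 ^ 2 * MvPowerSeries.X 1 ^ 2) ^ g *
        (1 - Cc (X 0 * X 1 ^ 2) * MvPowerSeries.X 0 ^ 2 * MvPowerSeries.X 1 ^ 2) ^ g := by
    rw [hP]
    simp only [map_mul, map_pow, map_add, map_sub, map_one, Stmt15Aux.E_C, Stmt15Aux.E_X]
    ring
  have hG : (1 - MvPowerSeries.X 1) * (Stmt15Aux.E P * F) = NumS g := by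
    rw [← hF, DenS, hEP]
    ring
  refine PowerSeries.ext fun n => ?_
  have hL : PowerSeries.coeff n (P * PowerSeries.mk fun i => coeffUT F i i)
      = coeffUT (Stmt15Aux.E P * F) n n := (Stmt15Aux.coeff_E_mul P F n).symm
  rw [hL, Stmt15Aux.coeff_telescope g n _ hG n]
  have hsum : ∑ k ∈ Finset.range (n + 1), coeffUT (NumS g) n k
      = if n ≤ g then (Wpoly g).coeff n else 0 := by
    by_cases hng : n ≤ g
    · rw [if_pos hng, Finset.sum_eq_single_of_mem n (Finset.mem_range.2 (by omega))]
      · rw [Stmt15Aux.coeff_NumS g n n le_rfl, if_pos ⟨rfl, hng⟩]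
      · intro k hk hkn
        rw [Finset.mem_range] at hk
        rw [Stmt15Aux.coeff_NumS g n k (by omega), if_neg (fun hc => hkn hc.1.symm)]
    · rw [if_neg hng]
      apply Finset.sum_eq_zero
      intro k hk
      rw [Finset.mem_range] at hk
      rw [Stmt15Aux.coeff_NumS g n k (by omega), if_neg (fun hc => hng hc.2)]
  rw [hsum, map_sum]
  symm
  by_cases hng : n ≤ g
  · rw [if_pos hng, Finset.sum_eq_single_of_mem n (Finset.mem_range.2 (by omega))]
    · rw [PowerSeries.coeff_C_mul, PowerSeries.coeff_X_pow, if_pos rfl, mul_one]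
    · intro j _ hjn
      rw [PowerSeries.coeff_C_mul, PowerSeries.coeff_X_pow, if_neg (Ne.symm hjn), mul_zero]
  · rw [if_neg hng]
    apply Finset.sum_eq_zero
    intro j hj
    rw [Finset.mem_range] at hj
    rw [PowerSeries.coeff_C_mul, PowerSeries.coeff_X_pow, if_neg (by omega), mul_zero]

end
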